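/- Let W be an n×n max-plus matrix. The pair (ε_W, δ_W) is an adjunction on [a,b]^n (i.e., both map L to L and δ_W(x) ≤ y ⟺ x ≤ ε_W(y) for all x,y ∈ L) if and only if W is doubly-0-astic (every row supremum and every column supremum equals 0). -/

import Mathlib

lemma L1 (x : EReal) (r : ℝ) : x + r ≤ r ↔ x ≤ 0 := by
  induction x using EReal.rec with
  | bot => simp
  | coe x => norm_cast; constructor <;> intro h <;> linarith
  | top => simp [EReal.top_add_coe]

lemma L2 (x : EReal) (r : ℝ) : (r : EReal) ≤ x + r ↔ 0 ≤ x := by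
  induction x using EReal.rec with
  | bot => simp
  | coe x => norm_cast; constructor <;> intro h <;> linarith
  | top => simp [EReal.top_add_coe]

lemma L3 (x : EReal) (r : ℝ) : (r : EReal) - x ≤ r ↔ 0 ≤ x := by
  induction x using EReal.rec with
  | bot => simp [EReal.coe_sub_bot]
  | coe x => norm_cast; constructor <;> intro h <;> linarith
  | top => simp

lemma L4 (x : EReal) (r : ℝ) : (r : EReal) ≤ (r : EReal) - x ↔ x ≤ 0 := by
  induction x using EReal.rec with
  | bot => simp [EReal.coe_sub_bot]
  | coe x => norm_cast; constructor <;> intro h <;> linarith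
  | top => simp

lemma L5 (w : EReal) (x y : ℝ) : w + x ≤ y ↔ (x : EReal) ≤ (y : EReal) - w := by
  induction w using EReal.rec with
  | bot => simp [EReal.coe_sub_bot]
  | coe w =>
      rw [show ((y:EReal) - w) = ((y - w : ℝ) : EReal) by norm_cast]
      norm_cast; constructor <;> intro h <;> linarith
  | top => simp [EReal.top_add_coe]



/-- Max-plus product of a matrix with a real vector: `(W ⊗ x)_i = ⨆ j, w_ij + x_j`. -/
noncomputable def deltaE {n : ℕ} (W : Fin n → Fin n → EReal) (x : Fin n → ℝ) (i : Fin n) : EReal :=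
  ⨆ j, W i j + (x j : EReal)

/-- Min-plus adjoint candidate: `ε_W(y)_i = ⨅ j, y_j - w_ji`. -/
noncomputable def epsE {n : ℕ} (W : Fin n → Fin n → EReal) (y : Fin n → ℝ) (i : Fin n) : EReal :=
  ⨅ j, (y j : EReal) - W j i

/-- Row-0-astic: every row supremum equals 0. -/
def RowAstic {n : ℕ} (W : Fin n → Fin n → EReal) : Prop := ∀ i, (⨆ j, W i j) = 0

/-- Column-0-astic: every column supremum equals 0. -/
def ColAstic {n : ℕ} (W : Fin n → Fin n → EReal) : Prop := ∀ j, (⨆ i, W i j) = 0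

/-- Doubly-0-astic. -/
def DoublyAstic {n : ℕ} (W : Fin n → Fin n → EReal) : Prop := RowAstic W ∧ ColAstic W

/-- `(ε_W, δ_W)` is an adjunction on `[a,b]^n` iff `W` is doubly-0-astic. -/
theorem stmt4 (n : ℕ) (hn : 0 < n) (a b : ℝ) (ha : 0 ≤ a) (hab : a < b)
    (W : Fin n → Fin n → EReal) :
    ((∀ x : Fin n → ℝ, (∀ i, x i ∈ Set.Icc a b) →
        ∀ i, deltaE W x i ∈ Set.Icc (a : EReal) (b : EReal)) ∧
      (∀ y : Fin n → ℝ, (∀ i, y i ∈ Set.Icc a b) →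
        ∀ i, epsE W y i ∈ Set.Icc (a : EReal) (b : EReal)) ∧
      (∀ x y : Fin n → ℝ, (∀ i, x i ∈ Set.Icc a b) → (∀ i, y i ∈ Set.Icc a b) →
        ((∀ i, deltaE W x i ≤ (y i : EReal)) ↔ (∀ i, (x i : EReal) ≤ epsE W y i))))
    ↔ DoublyAstic W := by
  have hnn : Nonempty (Fin n) := ⟨⟨0, hn⟩⟩
  have hmema : ∀ i : Fin n, (fun _ : Fin n => a) i ∈ Set.Icc a b :=
    fun i => ⟨le_refl a, hab.le⟩
  have hmemb : ∀ i : Fin n, (fun _ : Fin n => b) i ∈ Set.Icc a b :=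
    fun i => ⟨hab.le, le_refl b⟩
  constructor
  · rintro ⟨hδ, hε, -⟩
    constructor
    · intro i
      -- row astic
      have hub : (⨆ j, W i j) ≤ 0 := by
        have h := (hδ (fun _ => b) hmemb i).2
        rw [deltaE] at h
        refine iSup_le fun j => ?_
        have := le_trans (le_iSup (fun j => W i j + (b : EReal)) j) h
        exact (L1 (W i j) b).1 this
      have hlb : (0 : EReal) ≤ ⨆ j, W i j := by
        have h := (hδ (fun _ => a) hmema i).1
        rw [deltaE] at h
        have h2 : (⨆ j, W i j + (a : EReal)) ≤ (⨆ j, W i j) + (a : EReal) :=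
          iSup_le fun j => add_le_add_left (le_iSup (fun j => W i j) j) _
        exact (L2 _ a).1 (le_trans h h2)
      exact le_antisymm hub hlb
    · intro j
      -- column astic
      have hub : (⨆ i, W i j) ≤ 0 := by
        have h := (hε (fun _ => a) hmema j).1
        rw [epsE] at h
        refine iSup_le fun k => ?_
        have := le_trans h (iInf_le (fun k => (a : EReal) - W k j) k)
        exact (L4 (W k j) a).1 this
      have hlb : (0 : EReal) ≤ ⨆ i, W i j := by
        have h := (hε (fun _ => b) hmemb j).2
        rw [epsE] at h
        have h2 : (b : EReal) - (⨆ i, W i j) ≤ ⨅ k, (b : EReal) - W k j :=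
          le_iInf fun k => EReal.sub_le_sub le_rfl (le_iSup (fun i => W i j) k)
        exact (L3 _ b).1 (le_trans h2 h)
      exact le_antisymm hub hlb
  · rintro ⟨hr, hc⟩
    have hle : ∀ i j, W i j ≤ 0 := fun i j => (hr i) ▸ le_iSup (fun j => W i j) j
    have hle' : ∀ i j, W i j ≤ 0 := fun i j => (hc j) ▸ le_iSup (fun i => W i j) i
    refine ⟨?_, ?_, ?_⟩
    · intro x hx i
      constructor
      · obtain ⟨j₀, hj₀⟩ := Finite.exists_max (fun j => W i j)
        have hmax : W i j₀ = 0 := le_antisymm (hle i j₀) (by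
          rw [← hr i]; exact iSup_le hj₀)
        calc (a : EReal) = W i j₀ + (a : EReal) := by rw [hmax, zero_add]
          _ ≤ W i j₀ + (x j₀ : EReal) := by
              exact add_le_add_right (EReal.coe_le_coe_iff.2 (hx j₀).1) _
          _ ≤ deltaE W x i := le_iSup (fun j => W i j + (x j : EReal)) j₀
      · refine iSup_le fun j => ?_
        calc W i j + (x j : EReal) ≤ 0 + (b : EReal) :=
              add_le_add (hle i j) (EReal.coe_le_coe_iff.2 (hx j).2)
          _ = (b : EReal) := zero_add _
    · intro y hy i
      constructor
      · refine le_iInf fun j => ?_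
        calc (a : EReal) ≤ (y j : EReal) := EReal.coe_le_coe_iff.2 (hy j).1
          _ = (y j : EReal) - 0 := by rw [sub_zero]
          _ ≤ (y j : EReal) - W j i := EReal.sub_le_sub le_rfl (hle j i)
      · obtain ⟨j₀, hj₀⟩ := Finite.exists_max (fun k => W k i)
        have hmax : W j₀ i = 0 := le_antisymm (hle j₀ i) (by
          rw [← hc i]; exact iSup_le hj₀)
        calc epsE W y i ≤ (y j₀ : EReal) - W j₀ i :=
              iInf_le (fun k => (y k : EReal) - W k i) j₀
          _ = (y j₀ : EReal) := by rw [hmax, sub_zero]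
          _ ≤ (b : EReal) := EReal.coe_le_coe_iff.2 (hy j₀).2
    · intro x y hx hy
      simp only [deltaE, epsE, iSup_le_iff, le_iInf_iff]
      constructor
      · intro h j i
        exact (L5 (W i j) (x j) (y i)).1 (h i j)
      · intro h i j
        exact (L5 (W i j) (x j) (y i)).2 (h j i)
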